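/- For partitions λ, μ, the set {α : α is a distinct permutation of μ and λ/α is a generalized vertical strip, i.e., λ_i − α_i ∈ {0,1} for all i} is non-empty if and only if λ/μ is a vertical strip, and in that case its cardinality equals the product over i ≥ 1 of binomial(λ'_i − λ'_{i+1}, λ'_i − μ'_i). -/

import Mathlib

open Finset

/-- The conjugate partition: `conjPart l i = #{j : l j ≥ i}` (so `conjPart l i` is `l'_i`). -/
def conjPart {k : ℕ} (l : Fin k → ℕ) (i : ℕ) : ℕ :=
  (Finset.univ.filter fun j => i ≤ l j).card

/-- The set of distinct permutations `α` of `μ` such that `λ/α` is a generalized vertical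
strip, i.e. `λ i − α i ∈ {0,1}` for all `i`. -/
def permsVStrip {k : ℕ} (l m : Fin k → ℕ) : Set (Fin k → ℕ) :=
  {a | (∃ w : Equiv.Perm (Fin k), a = m ∘ w) ∧ ∀ i, a i ≤ l i ∧ l i ≤ a i + 1}

namespace VStripAux

variable {k : ℕ}

lemma conjPart_zero (l : Fin k → ℕ) : conjPart l 0 = k := by
  simp [conjPart]

lemma conjPart_eq_zero {f : Fin k → ℕ} {t : ℕ} (h : ∀ i, f i < t) : conjPart f t = 0 := by
  rw [conjPart, Finset.card_eq_zero, Finset.filter_eq_empty_iff]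
  intro i _
  exact fun hi => absurd hi (by have := h i; omega)

lemma conjPart_eq_countP (f : Fin k → ℕ) (t : ℕ) :
    conjPart f t = Multiset.countP (fun x => t ≤ x) (Finset.univ.val.map f) := by
  rw [Multiset.countP_map]
  rfl

lemma exists_perm_iff (a m : Fin k → ℕ) :
    (∃ w : Equiv.Perm (Fin k), a = m ∘ w) ↔
      Finset.univ.val.map a = Finset.univ.val.map m := by
  constructor
  · rintro ⟨w, rfl⟩
    rw [Fin.univ_val_map, Fin.univ_val_map, Multiset.coe_eq_coe]
    exact w.ofFn_comp_perm m
  · intro h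
    rw [Fin.univ_val_map, Fin.univ_val_map, Multiset.coe_eq_coe] at h
    set σ := Tuple.sort a with hσ
    set τ := Tuple.sort m with hτ
    have h1 : Monotone (a ∘ σ) := Tuple.monotone_sort a
    have h2 : Monotone (m ∘ τ) := Tuple.monotone_sort m
    have hp : (List.ofFn (a ∘ σ)).Perm (List.ofFn (m ∘ τ)) :=
      ((σ.ofFn_comp_perm a).trans h).trans (τ.ofFn_comp_perm m).symm
    have he : a ∘ σ = m ∘ τ := List.ofFn_injective
      (List.Perm.eq_of_sortedLE h1.sortedLE_ofFn h2.sortedLE_ofFn hp)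
    refine ⟨σ.symm.trans τ, funext fun i => ?_⟩
    have := congrFun he (σ.symm i)
    simpa using this

lemma conj_split (f : Fin k → ℕ) (v : ℕ) :
    conjPart f v = conjPart f (v + 1) + (Finset.univ.filter fun i => f i = v).card := by
  classical
  have heq : (Finset.univ.filter fun i => v ≤ f i)
      = (Finset.univ.filter fun i => v + 1 ≤ f i) ∪ (Finset.univ.filter fun i => f i = v) := by
    ext i
    simp only [mem_filter, mem_union, mem_univ, true_and]
    omega
  have hdis : Disjoint (Finset.univ.filter fun i => v + 1 ≤ f i)
      (Finset.univ.filter fun i => f i = v) := by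
    rw [Finset.disjoint_left]
    intro i hi1 hi2
    simp only [mem_filter] at hi1 hi2
    omega
  rw [conjPart, heq, Finset.card_union_of_disjoint hdis, conjPart]

lemma multiset_eq_iff_conjPart (a m : Fin k → ℕ) :
    Finset.univ.val.map a = Finset.univ.val.map m ↔ ∀ t, conjPart a t = conjPart m t := by
  constructor
  · intro h t
    rw [conjPart_eq_countP, conjPart_eq_countP, h]
  · intro h
    rw [Multiset.ext]
    intro v
    rw [Multiset.count_map, Multiset.count_map]
    have ca : Multiset.card (Multiset.filter (fun i => v = a i) Finset.univ.val)
        = (Finset.univ.filter fun i => a i = v).card := by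
      simp only [Finset.card, conjPart, Finset.filter]
      congr 1
      apply Multiset.filter_congr
      intro i _
      constructor <;> omega
    have cm : Multiset.card (Multiset.filter (fun i => v = m i) Finset.univ.val)
        = (Finset.univ.filter fun i => m i = v).card := by
      simp only [Finset.card, conjPart, Finset.filter]
      congr 1
      apply Multiset.filter_congr
      intro i _
      constructor <;> omega
    rw [ca, cm]
    have d1 := conj_split a v
    have d2 := conj_split m v
    have h1 := h v
    have h2 := h (v + 1)
    omega

lemma antitone_char {l : Fin k → ℕ} (hl : Antitone l) (i : Fin k) (t : ℕ) :
    t ≤ l i ↔ (i : ℕ) < conjPart l t := by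
  have := Tuple.lt_card_ge_iff_apply_ge_of_antitone (j := i) (a := t) hl
  exact this.symm

lemma conj_le_of_le {a l : Fin k → ℕ} (h : ∀ i, a i ≤ l i) (t : ℕ) :
    conjPart a t ≤ conjPart l t := by
  apply Finset.card_le_card
  intro i hi
  simp only [mem_filter, mem_univ, true_and] at hi ⊢
  have := h i
  omega

lemma conj_succ_le {a l : Fin k → ℕ} (h : ∀ i, l i ≤ a i + 1) (t : ℕ) :
    conjPart l (t + 1) ≤ conjPart a t := by
  apply Finset.card_le_card
  intro i hi
  simp only [mem_filter, mem_univ, true_and] at hi ⊢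
  have := h i
  omega

lemma pointwise_of_conj {l m : Fin k → ℕ} (hl : Antitone l) (hm : Antitone m)
    (h1 : ∀ t, conjPart m t ≤ conjPart l t) (h2 : ∀ t, conjPart l (t + 1) ≤ conjPart m t)
    (i : Fin k) : m i ≤ l i ∧ l i ≤ m i + 1 := by
  constructor
  · rcases Nat.eq_zero_or_pos (m i) with h | h
    · omega
    · have hx : (i : ℕ) < conjPart m (m i) := (antitone_char hm i _).1 le_rfl
      exact (antitone_char hl i (m i)).2 (lt_of_lt_of_le hx (h1 _))
  · rcases le_or_gt (l i) 1 with h | h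
    · omega
    · have hx : (i : ℕ) < conjPart l (l i) := (antitone_char hl i _).1 le_rfl
      have h3 : conjPart l (l i) ≤ conjPart m (l i - 1) := by
        have := h2 (l i - 1)
        rwa [Nat.sub_add_cancel (by omega)] at this
      have := (antitone_char hm i (l i - 1)).2 (lt_of_lt_of_le hx h3)
      omega

lemma conj_decomp {a l : Fin k → ℕ} (h : ∀ i, a i ≤ l i ∧ l i ≤ a i + 1) (t : ℕ) :
    conjPart a (t + 1) = conjPart l (t + 2)
      + (Finset.univ.filter fun i => l i = t + 1 ∧ a i = l i).card := by
  classical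
  have heq : (Finset.univ.filter fun i => t + 1 ≤ a i)
      = (Finset.univ.filter fun i => t + 2 ≤ l i)
        ∪ (Finset.univ.filter fun i => l i = t + 1 ∧ a i = l i) := by
    ext i
    simp only [mem_filter, mem_union, mem_univ, true_and]
    have := h i
    omega
  have hdis : Disjoint (Finset.univ.filter fun i => t + 2 ≤ l i)
      (Finset.univ.filter fun i => l i = t + 1 ∧ a i = l i) := by
    rw [Finset.disjoint_left]
    intro i hi1 hi2
    simp only [mem_filter] at hi1 hi2
    omega
  rw [conjPart, heq, Finset.card_union_of_disjoint hdis, conjPart]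

end VStripAux

open VStripAux in
/-- the set is non-empty iff `λ/μ` is a vertical strip, and in that case its
cardinality is `∏_{i ≥ 1} binom (λ'_i − λ'_{i+1}) (λ'_i − μ'_i)`. -/
theorem stmt1 {k : ℕ} (l m : Fin k → ℕ) (hl : Antitone l) (hm : Antitone m) :
    ((permsVStrip l m).Nonempty ↔ ∀ i, m i ≤ l i ∧ l i ≤ m i + 1) ∧
    ((∀ i, m i ≤ l i ∧ l i ≤ m i + 1) →
      (permsVStrip l m).ncard =
        ∏ᶠ i : ℕ, Nat.choose (conjPart l (i + 1) - conjPart l (i + 2))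
          (conjPart l (i + 1) - conjPart m (i + 1))) := by
  classical
  constructor
  · constructor
    · rintro ⟨a, ⟨hw, hstrip⟩⟩
      have hms := (exists_perm_iff a m).1 hw
      have hc := (multiset_eq_iff_conjPart a m).1 hms
      refine fun i => pointwise_of_conj hl hm (fun t => ?_) (fun t => ?_) i
      · rw [← hc]
        exact conj_le_of_le (fun i => (hstrip i).1) t
      · rw [← hc]
        exact conj_succ_le (fun i => (hstrip i).2) t
    · intro H
      refine ⟨m, ⟨⟨1, ?_⟩, H⟩⟩
      funext i
      simp
  · intro H
    set N := Finset.univ.sup l with hN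
    have hlN : ∀ i, l i ≤ N := fun i => Finset.le_sup (mem_univ i)
    have hcm_le : ∀ t, conjPart m t ≤ conjPart l t :=
      conj_le_of_le (fun i => (H i).1)
    have hcl_le : ∀ t, conjPart l (t + 1) ≤ conjPart m t :=
      conj_succ_le (fun i => (H i).2)
    -- the finite model of the set
    set S' : Finset (Fin k → ℕ) :=
      (Fintype.piFinset fun i => ({l i - 1, l i} : Finset ℕ)).filter
        (fun a => Finset.univ.val.map a = Finset.univ.val.map m) with hS'
    have hset : permsVStrip l m = ↑S' := by
      ext a
      simp only [permsVStrip, Set.mem_setOf_eq, hS', coe_filter, Fintype.mem_piFinset,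
        mem_insert, mem_singleton, Set.mem_setOf_eq]
      rw [exists_perm_iff]
      constructor
      · rintro ⟨h1, h2⟩
        exact ⟨fun i => by have := h2 i; omega, h1⟩
      · rintro ⟨h1, h2⟩
        exact ⟨h2, fun i => by have := h1 i; omega⟩
    rw [hset, Set.ncard_coe_finset]
    -- facts about members of S'
    have memS' : ∀ a ∈ S', (∀ i, a i ≤ l i ∧ l i ≤ a i + 1) ∧
        (∀ t, conjPart a t = conjPart m t) := by
      intro a ha
      rw [hS', Finset.mem_filter, Fintype.mem_piFinset] at ha
      refine ⟨fun i => ?_, (multiset_eq_iff_conjPart a m).1 ha.2⟩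
      have := ha.1 i
      simp only [mem_insert, mem_singleton] at this
      omega
    -- target Finset
    set c : ℕ → ℕ := fun t => conjPart m (t + 1) - conjPart l (t + 2) with hc
    set T : Finset (∀ t ∈ Finset.range N, Finset (Fin k)) :=
      (Finset.range N).pi
        (fun t => (Finset.univ.filter fun i => l i = t + 1).powersetCard (c t)) with hT
    have hcard : S'.card = T.card := by
      apply Finset.card_bij
        (fun a _ => fun t _ => Finset.univ.filter fun i => l i = t + 1 ∧ a i = l i)
      · intro a ha
        obtain ⟨hstrip, hconj⟩ := memS' a ha
        rw [hT, Finset.mem_pi]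
        intro t ht
        rw [Finset.mem_powersetCard]
        constructor
        · intro i hi
          simp only [mem_filter, mem_univ, true_and] at hi ⊢
          exact hi.1
        · have hd := conj_decomp hstrip t
          have h1 := hconj (t + 1)
          have h2 := hcl_le (t + 1)
          show _ = conjPart m (t + 1) - conjPart l (t + 2)
          omega
      · intro a ha b hb hfe
        obtain ⟨hsa, _⟩ := memS' a ha
        obtain ⟨hsb, _⟩ := memS' b hb
        funext i
        by_cases h0 : l i = 0
        · have := hsa i
          have := hsb i
          omega
        · have ht : l i - 1 ∈ Finset.range N := by
            rw [Finset.mem_range]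
            have := hlN i
            omega
          have hq := congrFun (congrFun hfe (l i - 1)) ht
          have hiff := Finset.ext_iff.mp hq i
          simp only [mem_filter, mem_univ, true_and] at hiff
          have := hsa i
          have := hsb i
          omega
      · intro g hg
        rw [hT, Finset.mem_pi] at hg
        set G : ℕ → Finset (Fin k) :=
          fun t => if ht : t ∈ Finset.range N then g t ht else ∅ with hG
        set a : Fin k → ℕ :=
          fun i => if 0 < l i ∧ i ∈ G (l i - 1) then l i else l i - 1 with ha
        have hstrip : ∀ i, a i ≤ l i ∧ l i ≤ a i + 1 := by
          intro i
          rw [ha]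
          dsimp only
          split <;> omega
        have hGsub : ∀ t (ht : t ∈ Finset.range N), G t = g t ht := by
          intro t ht
          rw [hG]
          exact dif_pos ht
        have hGblock : ∀ t (ht : t ∈ Finset.range N),
            G t ⊆ (Finset.univ.filter fun i => l i = t + 1) ∧ (G t).card = c t := by
          intro t ht
          rw [hGsub t ht]
          exact Finset.mem_powersetCard.mp (hg t ht)
        have hfilter : ∀ t, t ∈ Finset.range N →
            (Finset.univ.filter fun i => l i = t + 1 ∧ a i = l i) = G t := by
          intro t ht
          ext i
          simp only [mem_filter, mem_univ, true_and]
          constructor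
          · rintro ⟨h1, h2⟩
            rw [ha] at h2
            dsimp only at h2
            by_cases hcond : 0 < l i ∧ i ∈ G (l i - 1)
            · have hli : l i - 1 = t := by omega
              rw [← hli]
              exact hcond.2
            · rw [if_neg hcond] at h2
              omega
          · intro hi
            have hli : l i = t + 1 := by
              have := (hGblock t ht).1 hi
              simp only [mem_filter, mem_univ, true_and] at this
              exact this
            refine ⟨hli, ?_⟩
            rw [ha]
            dsimp only
            rw [if_pos ⟨by omega, by rw [show l i - 1 = t by omega]; exact hi⟩]
        have hconj : ∀ t, conjPart a t = conjPart m t := by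
          intro t
          match t with
          | 0 => rw [conjPart_zero, conjPart_zero]
          | s + 1 =>
            by_cases hs : s ∈ Finset.range N
            · have hd := conj_decomp hstrip s
              rw [hfilter s hs, (hGblock s hs).2] at hd
              have h2 : conjPart l (s + 2) ≤ conjPart m (s + 1) := hcl_le (s + 1)
              have hcs : c s = conjPart m (s + 1) - conjPart l (s + 2) := rfl
              omega
            · rw [Finset.mem_range, not_lt] at hs
              have h1 : conjPart a (s + 1) = 0 := by
                apply conjPart_eq_zero
                intro i
                have := hstrip i
                have := hlN i
                omega
              have h2 : conjPart m (s + 1) = 0 := by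
                apply conjPart_eq_zero
                intro i
                have := (H i).1
                have := hlN i
                omega
              rw [h1, h2]
        have haS : a ∈ S' := by
          rw [hS', Finset.mem_filter, Fintype.mem_piFinset]
          constructor
          · intro i
            simp only [mem_insert, mem_singleton]
            have := hstrip i
            rw [ha]
            dsimp only
            split
            · right; rfl
            · left; rfl
          · exact (multiset_eq_iff_conjPart a m).2 hconj
        refine ⟨a, haS, ?_⟩
        funext t ht
        rw [hfilter t ht, hGsub t ht]
    rw [hcard, hT, Finset.card_pi]
    have hfin : ∏ᶠ i : ℕ, Nat.choose (conjPart l (i + 1) - conjPart l (i + 2))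
          (conjPart l (i + 1) - conjPart m (i + 1))
        = ∏ t ∈ Finset.range N, Nat.choose (conjPart l (t + 1) - conjPart l (t + 2))
          (conjPart l (t + 1) - conjPart m (t + 1)) := by
      apply finprod_eq_prod_of_mulSupport_subset
      intro t ht
      simp only [Function.mem_mulSupport] at ht
      by_contra hmem
      apply ht
      simp only [Finset.mem_coe, Finset.mem_range, not_lt] at hmem
      have h1 : conjPart l (t + 1) = 0 := by
        apply conjPart_eq_zero
        intro i
        have := hlN i
        omega
      rw [h1]
      simp
    rw [hfin]
    apply Finset.prod_congr rfl
    intro t _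
    rw [Finset.card_powersetCard]
    have hblock : (Finset.univ.filter fun i => l i = t + 1).card
        = conjPart l (t + 1) - conjPart l (t + 2) := by
      have hd := conj_split l (t + 1)
      have hx : conjPart l (t + 1 + 1) = conjPart l (t + 2) := rfl
      omega
    rw [hblock]
    show (conjPart l (t + 1) - conjPart l (t + 2)).choose
        (conjPart m (t + 1) - conjPart l (t + 2)) = _
    have h1 : conjPart l (t + 2) ≤ conjPart m (t + 1) := hcl_le (t + 1)
    have h2 := hcm_le (t + 1)
    have h3 : conjPart l (t + 2) ≤ conjPart l (t + 1) := h1.trans h2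
    rw [show conjPart m (t + 1) - conjPart l (t + 2)
        = (conjPart l (t + 1) - conjPart l (t + 2)) - (conjPart l (t + 1) - conjPart m (t + 1))
        from by omega]
    rw [Nat.choose_symm (by omega)]
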